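/- Let n ≥ 1 and let ε : ZMod n → ({1, −1} ⊆ ℤ) be a choice of signs. Let R = ℂ[X_0, …, X_{n−1}] / I, where I is the ideal generated by X_i² for all i and by X_{i+1} − ε(i)·X_i for all i ∈ ZMod n (indices cyclic). Then the ℂ-dimension of R equals 2 if ∏_{i} ε(i) = 1, and equals 1 if ∏_{i} ε(i) = −1. -/

import Mathlib

set_option linter.unusedSectionVars false
open MvPolynomial

section aux
variable (n : ℕ) [NeZero n] (ε : ZMod n → ℤ)

noncomputable def circleIdeal : Ideal (MvPolynomial (ZMod n) ℂ) :=
  Ideal.span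
    ((Set.range fun i : ZMod n =>
        (MvPolynomial.X i : MvPolynomial (ZMod n) ℂ) ^ 2) ∪
      (Set.range fun i : ZMod n =>
        MvPolynomial.X (i + 1) -
          MvPolynomial.C ((ε i : ℂ)) * MvPolynomial.X i))

lemma sq_mem (i : ZMod n) : (X i : MvPolynomial (ZMod n) ℂ) ^ 2 ∈ circleIdeal n ε :=
  Ideal.subset_span (Set.mem_union_left _ ⟨i, rfl⟩)

lemma rel_mem (i : ZMod n) :
    (X (i + 1) - C ((ε i : ℂ)) * X i : MvPolynomial (ZMod n) ℂ) ∈ circleIdeal n ε :=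
  Ideal.subset_span (Set.mem_union_right _ ⟨i, rfl⟩)

lemma mk_rel (i : ZMod n) :
    Ideal.Quotient.mkₐ ℂ (circleIdeal n ε) (X (i + 1)) =
      ((ε i : ℂ)) • Ideal.Quotient.mkₐ ℂ (circleIdeal n ε) (X i) := by
  have h := (Ideal.Quotient.eq_zero_iff_mem).2 (rel_mem n ε i)
  have h2 : Ideal.Quotient.mkₐ ℂ (circleIdeal n ε) (X (i + 1) - C ((ε i : ℂ)) * X i) = 0 := h
  rw [map_sub, sub_eq_zero] at h2
  rw [h2, map_mul, ← MvPolynomial.algebraMap_eq, AlgHom.commutes, ← Algebra.smul_def]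

lemma mk_X_nat (k : ℕ) :
    Ideal.Quotient.mkₐ ℂ (circleIdeal n ε) (X ((k : ZMod n))) =
      ((∏ j ∈ Finset.range k, ε ((j : ZMod n)) : ℤ) : ℂ) •
        Ideal.Quotient.mkₐ ℂ (circleIdeal n ε) (X 0) := by
  induction k with
  | zero => simp
  | succ k ih =>
      have : ((k + 1 : ℕ) : ZMod n) = (k : ZMod n) + 1 := by push_cast; ring
      rw [this, mk_rel n ε, ih, Finset.prod_range_succ, smul_smul]
      push_cast
      ring_nf

lemma mk_X (i : ZMod n) :
    Ideal.Quotient.mkₐ ℂ (circleIdeal n ε) (X i) =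
      ((∏ j ∈ Finset.range i.val, ε ((j : ZMod n)) : ℤ) : ℂ) •
        Ideal.Quotient.mkₐ ℂ (circleIdeal n ε) (X 0) := by
  conv_lhs => rw [← ZMod.natCast_rightInverse i]
  exact mk_X_nat n ε i.val

lemma prod_univ_eq :
    (∏ i, ε i) = ∏ j ∈ Finset.range n, ε ((j : ZMod n)) := by
  rw [Finset.prod_bij' (fun (i : ZMod n) _ => i.val) (fun j _ => ((j : ZMod n)))]
  · intro i _; exact Finset.mem_range.2 (ZMod.val_lt i)
  · intro j hj; exact Finset.mem_univ _
  · intro i _; exact ZMod.natCast_rightInverse i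
  · intro j hj; exact ZMod.val_cast_of_lt (Finset.mem_range.1 hj)
  · intro i _; rw [ZMod.natCast_rightInverse i]

end aux

section main
variable (n : ℕ) [NeZero n] (ε : ZMod n → ℤ)

/-- coefficient -/
noncomputable def cc (i : ZMod n) : ℤ := ∏ j ∈ Finset.range i.val, ε ((j : ZMod n))

lemma cc_compat (h1 : (∏ i, ε i) = 1) (i : ZMod n) :
    cc n ε (i + 1) = ε i * cc n ε i := by
  have hvi : ((i.val : ℕ) : ZMod n) = i := ZMod.natCast_rightInverse i
  have hlt : i.val < n := ZMod.val_lt i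
  unfold cc
  by_cases hv : i.val + 1 < n
  · have : (i + 1 : ZMod n).val = i.val + 1 := by
      rw [← hvi, ← Nat.cast_one, ← Nat.cast_add, ZMod.val_cast_of_lt hv, ZMod.val_cast_of_lt hlt]
    rw [this, Finset.prod_range_succ, hvi, mul_comm]
  · have hn : i.val + 1 = n := by omega
    have hz : (i + 1 : ZMod n) = 0 := by
      rw [← hvi, ← Nat.cast_one, ← Nat.cast_add, hn, ZMod.natCast_self]
    rw [hz, ZMod.val_zero, Finset.prod_range_zero]
    rw [prod_univ_eq] at h1
    rw [← h1, show Finset.range n = Finset.range (i.val + 1) by rw [hn],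
      Finset.prod_range_succ, hvi, mul_comm]

lemma cc_zero : cc n ε 0 = 1 := by simp [cc, ZMod.val_zero]

end main

section equivs
variable (n : ℕ) [NeZero n] (ε : ZMod n → ℤ)

lemma finrank_two (h1 : (∏ i, ε i) = 1) :
    Module.finrank ℂ (MvPolynomial (ZMod n) ℂ ⧸ circleIdeal n ε) = 2 := by
  set I := circleIdeal n ε with hI
  set A := AdjoinRoot (Polynomial.X ^ 2 : Polynomial ℂ) with hA
  have hroot : (AdjoinRoot.root (Polynomial.X ^ 2 : Polynomial ℂ)) ^ 2 = 0 := by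
    have := AdjoinRoot.isRoot_root (Polynomial.X ^ 2 : Polynomial ℂ)
    simpa [Polynomial.IsRoot] using this
  set f : MvPolynomial (ZMod n) ℂ →ₐ[ℂ] A :=
    MvPolynomial.aeval (fun i => ((cc n ε i : ℂ)) •
      AdjoinRoot.root (Polynomial.X ^ 2 : Polynomial ℂ)) with hf
  have hker : ∀ a ∈ I, f a = 0 := by
    intro a ha
    have hle : I ≤ RingHom.ker (f : MvPolynomial (ZMod n) ℂ →+* A) := by
      rw [hI, circleIdeal, Ideal.span_le]
      rintro x (⟨i, rfl⟩ | ⟨i, rfl⟩) <;> simp only [SetLike.mem_coe, RingHom.mem_ker,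
        AlgHom.coe_toRingHom, hf, map_sub, map_mul, map_pow, MvPolynomial.aeval_X,
        MvPolynomial.aeval_C]
      · rw [smul_pow, hroot, smul_zero]
      · have hcast : ((cc n ε (i + 1) : ℤ) : ℂ) = ((ε i : ℂ)) * ((cc n ε i : ℤ) : ℂ) := by
          rw [cc_compat n ε h1 i]; push_cast; ring
        rw [hcast, Algebra.smul_def, Algebra.smul_def, ← sub_eq_zero]
        push_cast
        ring
    exact hle ha
  set φ : (MvPolynomial (ZMod n) ℂ ⧸ I) →ₐ[ℂ] A := Ideal.Quotient.liftₐ I f hker with hφ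
  have hX0 : Polynomial.aeval (Ideal.Quotient.mkₐ ℂ I (MvPolynomial.X 0))
      (Polynomial.X ^ 2 : Polynomial ℂ) = 0 := by
    rw [map_pow, Polynomial.aeval_X, ← map_pow, Ideal.Quotient.mkₐ_eq_mk,
      Ideal.Quotient.eq_zero_iff_mem]
    exact sq_mem n ε 0
  set ψ : A →ₐ[ℂ] (MvPolynomial (ZMod n) ℂ ⧸ I) :=
    AdjoinRoot.liftAlgHom _ (Algebra.ofId ℂ _) (Ideal.Quotient.mkₐ ℂ I (MvPolynomial.X 0)) (by simpa using hX0) with hψ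
  have h₁ : φ.comp ψ = AlgHom.id ℂ A := by
    apply AdjoinRoot.algHom_ext
    rw [AlgHom.comp_apply, hψ, AdjoinRoot.liftAlgHom_root, AlgHom.id_apply, hφ,
      Ideal.Quotient.mkₐ_eq_mk, Ideal.Quotient.liftₐ_apply]
    erw [Ideal.Quotient.lift_mk]
    rw [hf]
    simp [cc_zero]
  have h₂ : ψ.comp φ = AlgHom.id ℂ _ := by
    apply Ideal.Quotient.algHom_ext ℂ
    apply MvPolynomial.algHom_ext
    intro i
    simp only [AlgHom.comp_apply, AlgHom.id_apply]
    rw [hφ, Ideal.Quotient.mkₐ_eq_mk, Ideal.Quotient.liftₐ_apply]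
    erw [Ideal.Quotient.lift_mk]
    rw [hf]
    simp only [AlgHom.coe_toRingHom, MvPolynomial.aeval_X]
    rw [map_smul, hψ, AdjoinRoot.liftAlgHom_root]
    rw [← Ideal.Quotient.mkₐ_eq_mk ℂ]
    exact (mk_X n ε i).symm
  let e : (MvPolynomial (ZMod n) ℂ ⧸ I) ≃ₐ[ℂ] A := AlgEquiv.ofAlgHom φ ψ h₁ h₂
  rw [e.toLinearEquiv.finrank_eq]
  rw [(AdjoinRoot.powerBasis' (Polynomial.monic_X_pow (R := ℂ) 2)).finrank,
    AdjoinRoot.powerBasis'_dim, Polynomial.natDegree_X_pow]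


lemma finrank_one (h1 : (∏ i, ε i) = -1) :
    Module.finrank ℂ (MvPolynomial (ZMod n) ℂ ⧸ circleIdeal n ε) = 1 := by
  set I := circleIdeal n ε with hI
  set f : MvPolynomial (ZMod n) ℂ →ₐ[ℂ] ℂ :=
    MvPolynomial.aeval (fun _ : ZMod n => (0 : ℂ)) with hf
  have hker : ∀ a ∈ I, f a = 0 := by
    intro a ha
    have hle : I ≤ RingHom.ker (f : MvPolynomial (ZMod n) ℂ →+* ℂ) := by
      rw [hI, circleIdeal, Ideal.span_le]
      rintro x (⟨i, rfl⟩ | ⟨i, rfl⟩) <;> simp [hf, RingHom.mem_ker]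
    exact hle ha
  set φ : (MvPolynomial (ZMod n) ℂ ⧸ I) →ₐ[ℂ] ℂ := Ideal.Quotient.liftₐ I f hker with hφ
  set ψ : ℂ →ₐ[ℂ] (MvPolynomial (ZMod n) ℂ ⧸ I) := Algebra.ofId ℂ _ with hψ
  -- mk (X 0) = 0
  have hX0 : Ideal.Quotient.mkₐ ℂ I (MvPolynomial.X 0) = 0 := by
    have h := mk_X_nat n ε n
    rw [ZMod.natCast_self, ← prod_univ_eq n ε, h1] at h
    have hneg : Ideal.Quotient.mkₐ ℂ I (MvPolynomial.X 0) =
        -Ideal.Quotient.mkₐ ℂ I (MvPolynomial.X 0) := by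
      conv_lhs => rw [h]
      push_cast
      rw [neg_smul, one_smul]
    have h2 : (2 : ℂ) • Ideal.Quotient.mkₐ ℂ I (MvPolynomial.X 0) = 0 := by
      rw [two_smul]
      exact eq_neg_iff_add_eq_zero.mp hneg
    have hrec : Ideal.Quotient.mkₐ ℂ I (MvPolynomial.X 0) =
        (2 : ℂ)⁻¹ • ((2 : ℂ) • Ideal.Quotient.mkₐ ℂ I (MvPolynomial.X 0)) := by
      rw [smul_smul]
      norm_num
    rw [hrec, h2, smul_zero]
  have hXi : ∀ i : ZMod n, Ideal.Quotient.mkₐ ℂ I (MvPolynomial.X i) = 0 := fun i => by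
    rw [mk_X n ε i, hX0, smul_zero]
  have h₁ : φ.comp ψ = AlgHom.id ℂ ℂ := by ext
  have h₂ : ψ.comp φ = AlgHom.id ℂ _ := by
    apply Ideal.Quotient.algHom_ext ℂ
    apply MvPolynomial.algHom_ext
    intro i
    simp only [AlgHom.comp_apply, AlgHom.id_apply]
    rw [hXi i, map_zero, map_zero]
  let e : (MvPolynomial (ZMod n) ℂ ⧸ I) ≃ₐ[ℂ] ℂ := AlgEquiv.ofAlgHom φ ψ h₁ h₂
  rw [e.toLinearEquiv.finrank_eq, Module.finrank_self]

end equivs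

/-- The algebraic model of a single circle: for signs `ε i ∈ {1, -1}`, the quotient of
`ℂ[X_i : i ∈ ZMod n]` by the ideal generated by all `X_i ^ 2` and all
`X_{i+1} - ε i · X_i` has `ℂ`-dimension `2` if `∏ ε i = 1` and `1` if `∏ ε i = -1`. -/
theorem circle_ring_dimension (n : ℕ) (hn : 1 ≤ n) (ε : ZMod n → ℤ)
    (hε : ∀ i, ε i = 1 ∨ ε i = -1) :
    haveI : NeZero n := ⟨by omega⟩
    Module.finrank ℂ
        (MvPolynomial (ZMod n) ℂ ⧸
          Ideal.span
            ((Set.range fun i : ZMod n =>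
                (MvPolynomial.X i : MvPolynomial (ZMod n) ℂ) ^ 2) ∪
              (Set.range fun i : ZMod n =>
                MvPolynomial.X (i + 1) -
                  MvPolynomial.C ((ε i : ℂ)) * MvPolynomial.X i))) =
      if (∏ i, ε i) = 1 then 2 else 1 := by
  haveI : NeZero n := ⟨by omega⟩
  have hunit : IsUnit (∏ i, ε i) := by
    apply Finset.prod_induction _ IsUnit (fun a b => IsUnit.mul) isUnit_one
    intro i _
    rcases hε i with h | h <;> rw [h]
    exacts [isUnit_one, isUnit_one.neg]
  rcases Int.isUnit_iff.mp hunit with h | h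
  · rw [if_pos h]
    exact finrank_two n ε h
  · rw [if_neg (by rw [h]; norm_num)]
    exact finrank_one n ε h
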